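/- Let n ≥ 5 and consider a reaction network on n species with 3 reactions, with source matrix A ∈ ℤ^{n×3} (nonnegative entries) and stoichiometric matrix Γ ∈ ℤ^{n×3} (with A + Γ entrywise nonnegative), such that Γ has rank 2, the network is quadratic (every column of A has entry sum at most 2), no species is trivial (for every i there is some j with Γ_{ij} ≠ 0), and some reaction is 2X_i → 3X_i for some species i (some column of A equals 2e_i with the corresponding column of Γ equal to e_i). Then the network is dynamically trivial: there is no v ∈ ℝ^3 with all entries positive such that Γv = 0. -/

import Mathlib

open scoped BigOperators

/-- For `n ≥ 5`, any quadratic `(n,3)` network of rank two without trivial species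
containing a reaction `2Xᵢ → 3Xᵢ` is dynamically trivial. -/
theorem stmt13 (n : ℕ) (hn : 5 ≤ n)
    (A Γ : Matrix (Fin n) (Fin 3) ℤ)
    (hA : ∀ i j, 0 ≤ A i j)
    (hAΓ : ∀ i j, 0 ≤ A i j + Γ i j)
    (hrank : (Γ.map (fun z : ℤ => (z : ℝ))).rank = 2)
    (hquad : ∀ j, (∑ i, A i j) ≤ 2)
    (hnontriv : ∀ i, ∃ j, Γ i j ≠ 0)
    (hauto : ∃ (i : Fin n) (j : Fin 3), (∀ k, A k j = if k = i then 2 else 0) ∧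
      (∀ k, Γ k j = if k = i then 1 else 0)) :
    ¬ ∃ v : Fin 3 → ℝ, (∀ j, 0 < v j) ∧
      (Γ.map (fun z : ℤ => (z : ℝ))).mulVec v = 0 := by
  rintro ⟨v, hv, hΓv⟩
  obtain ⟨i, j₀, hAcol, hΓcol⟩ := hauto
  -- every row has a negative entry
  have key : ∀ k : Fin n, ∃ j, Γ k j < 0 := by
    intro k
    by_contra h
    push_neg at h
    obtain ⟨j, hj⟩ := hnontriv k
    apply hj
    have hrow : ∑ j, ((Γ k j : ℝ)) * v j = 0 := by
      have := congrFun hΓv k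
      simpa [Matrix.mulVec, dotProduct, Matrix.map_apply] using this
    have hall := (Finset.sum_eq_zero_iff_of_nonneg
      (fun j _ => mul_nonneg (by exact_mod_cast h j) (hv j).le)).mp hrow j
      (Finset.mem_univ j)
    have hvne : v j ≠ 0 := (hv j).ne'
    have : (Γ k j : ℝ) = 0 := by
      rcases mul_eq_zero.mp hall with h' | h'
      · exact h'
      · exact absurd h' hvne
    exact_mod_cast this
  -- negative-entry sets
  set S : Fin 3 → Finset (Fin n) := fun j => Finset.univ.filter (fun k => Γ k j < 0) with hS
  have hcard : ∀ j, (S j).card ≤ 2 := by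
    intro j
    have h1 : ∀ k ∈ S j, (1 : ℤ) ≤ A k j := by
      intro k hk
      have hk' : Γ k j < 0 := (Finset.mem_filter.mp hk).2
      have := hAΓ k j
      omega
    have h2 : ((S j).card : ℤ) ≤ ∑ k ∈ S j, A k j := by
      have := Finset.card_nsmul_le_sum (S j) (fun k => A k j) 1 h1
      simpa using this
    have h3 : ∑ k ∈ S j, A k j ≤ ∑ k, A k j :=
      Finset.sum_le_sum_of_subset_of_nonneg (Finset.subset_univ _)
        (fun k _ _ => hA k j)
    have := hquad j
    omega
  have hSj₀ : S j₀ = ∅ := by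
    apply Finset.filter_eq_empty_iff.mpr
    intro k _
    rw [hΓcol k]
    split <;> omega
  -- covering
  have hcover : (Finset.univ : Finset (Fin n)) ⊆ Finset.univ.biUnion S := by
    intro k _
    obtain ⟨j, hj⟩ := key k
    exact Finset.mem_biUnion.mpr ⟨j, Finset.mem_univ j, Finset.mem_filter.mpr ⟨Finset.mem_univ k, hj⟩⟩
  have hn' : n ≤ ∑ j, (S j).card := by
    calc n = (Finset.univ : Finset (Fin n)).card := by simp
    _ ≤ (Finset.univ.biUnion S).card := Finset.card_le_card hcover
    _ ≤ ∑ j, (S j).card := Finset.card_biUnion_le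
  have hsum3 : ∑ j, (S j).card = (S 0).card + (S 1).card + (S 2).card := by
    simp [Fin.sum_univ_three]
  have hj₀0 : (S j₀).card = 0 := by rw [hSj₀]; simp
  fin_cases j₀ <;>
    [skip; skip; skip] <;>
    · simp_all
      have h0 := hcard 0
      have h1 := hcard 1
      have h2 := hcard 2
      have h3 : ∀ x : Fin n, ¬ ((if x = i then (1:ℤ) else 0) < 0) := by
        intro x; split <;> omega
      simp only [Finset.filter_false_of_mem (fun x _ => h3 x), Finset.card_empty] at *
      omega
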